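/- Let s ↦ (t,x,v,a,p_t,p_x,p_v,p_a)(s) be a differentiable solution of the 1D Hamiltonian geodesic system (H1) on an interval where h(s) = p_t + v(s)·p_x + a(s)·p_v(s) never vanishes. Then, reparameterizing by the time variable t (i.e. d/dt = (1/h(s))·d/ds, which is possible since t'(s) = h(s) ≠ 0), the dual variables satisfy dp_a/dt = −p_v, dp_v/dt = −p_x, dp_x/dt = 0, dp_t/dt = 0; in particular, p_a expressed as a function of t is a polynomial of degree at most two. -/

import Mathlib

/-- On a convex set, a function whose derivative vanishes is constant. -/
lemma const_of_deriv_zero {U : Set ℝ} (hU : Convex ℝ U) {f : ℝ → ℝ}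
    (hf : ∀ u ∈ U, HasDerivAt f 0 u) {u₀ u : ℝ} (hu₀ : u₀ ∈ U) (hu : u ∈ U) :
    f u = f u₀ := by
  have := hU.norm_image_sub_le_of_norm_hasDerivWithin_le (C := 0) (f' := fun _ => (0 : ℝ))
    (fun x hx => (hf x hx).hasDerivWithinAt) (fun x _ => by simp) hu₀ hu
  simpa [sub_eq_zero] using this

/-- Along a solution of (H1) on an open interval where
`h = p_t + v·p_x + a·p_v` never vanishes, one can reparameterize by the time
variable `t` (possible since `t' = h ≠ 0`): for any local inverse `τ` of `t`, the
dual variables satisfy `dp_a/dt = −p_v`, `dp_v/dt = −p_x`, `dp_x/dt = 0`,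
`dp_t/dt = 0`; in particular `p_a`, as a function of `t`, is a polynomial of degree
at most two. -/
theorem stmt_16
    (S₀ S₁ : ℝ)
    (t x v a pt px pv pa : ℝ → ℝ)
    (h : ℝ → ℝ)
    (hh : ∀ s, h s = pt s + v s * px s + a s * pv s)
    (hpt : ∀ s ∈ Set.Ioo S₀ S₁, HasDerivAt pt 0 s)
    (hpx : ∀ s ∈ Set.Ioo S₀ S₁, HasDerivAt px 0 s)
    (hpv : ∀ s ∈ Set.Ioo S₀ S₁, HasDerivAt pv (-(px s) * h s) s)
    (hpa : ∀ s ∈ Set.Ioo S₀ S₁, HasDerivAt pa (-(pv s) * h s) s)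
    (ht : ∀ s ∈ Set.Ioo S₀ S₁, HasDerivAt t (h s) s)
    (hx : ∀ s ∈ Set.Ioo S₀ S₁, HasDerivAt x (v s * h s) s)
    (hv : ∀ s ∈ Set.Ioo S₀ S₁, HasDerivAt v (a s * h s) s)
    (ha : ∀ s ∈ Set.Ioo S₀ S₁, HasDerivAt a (pa s) s)
    (hne : ∀ s ∈ Set.Ioo S₀ S₁, h s ≠ 0) :
    ∀ (U : Set ℝ) (τ : ℝ → ℝ), IsOpen U → Convex ℝ U →
      Set.MapsTo τ U (Set.Ioo S₀ S₁) → ContinuousOn τ U →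
      (∀ u ∈ U, t (τ u) = u) →
      ((∀ u ∈ U,
          HasDerivAt (pa ∘ τ) (-(pv (τ u))) u ∧
          HasDerivAt (pv ∘ τ) (-(px (τ u))) u ∧
          HasDerivAt (px ∘ τ) 0 u ∧
          HasDerivAt (pt ∘ τ) 0 u) ∧
        ∃ c₀ c₁ c₂ : ℝ, ∀ u ∈ U, pa (τ u) = c₀ + c₁ * u + c₂ * u ^ 2) := by
  intro U τ hUopen hUconv hmaps hτcont hinv
  -- τ has derivative (h (τ u))⁻¹ at every u ∈ U
  have hτd : ∀ u ∈ U, HasDerivAt τ (h (τ u))⁻¹ u := by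
    intro u hu
    exact HasDerivAt.of_local_left_inverse
      (hτcont.continuousAt (hUopen.mem_nhds hu))
      (ht (τ u) (hmaps hu)) (hne (τ u) (hmaps hu))
      (Filter.eventually_of_mem (hUopen.mem_nhds hu) hinv)
  have key : ∀ u ∈ U,
      HasDerivAt (pa ∘ τ) (-(pv (τ u))) u ∧
      HasDerivAt (pv ∘ τ) (-(px (τ u))) u ∧
      HasDerivAt (px ∘ τ) 0 u ∧
      HasDerivAt (pt ∘ τ) 0 u := by
    intro u hu
    have hs := hmaps hu
    have hne' := hne (τ u) hs
    have hτ := hτd u hu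
    refine ⟨?_, ?_, ?_, ?_⟩
    · have := (hpa (τ u) hs).comp u hτ
      exact this.congr_deriv (by field_simp)
    · have := (hpv (τ u) hs).comp u hτ
      exact this.congr_deriv (by field_simp)
    · simpa using (hpx (τ u) hs).comp u hτ
    · simpa using (hpt (τ u) hs).comp u hτ
  refine ⟨key, ?_⟩
  rcases Set.eq_empty_or_nonempty U with hUe | ⟨u₀, hu₀⟩
  · exact ⟨0, 0, 0, fun u hu => absurd hu (by simp [hUe])⟩
  set P := px (τ u₀) with hP
  -- px ∘ τ is constant
  have hpxc : ∀ u ∈ U, px (τ u) = P := by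
    intro u hu
    exact const_of_deriv_zero hUconv (fun w hw => (key w hw).2.2.1) hu₀ hu
  -- pv ∘ τ is affine
  have hpvc : ∀ u ∈ U, pv (τ u) = pv (τ u₀) + P * u₀ - P * u := by
    intro u hu
    have hF : ∀ w ∈ U, HasDerivAt (fun z => pv (τ z) + P * z) 0 w := by
      intro w hw
      have := ((key w hw).2.1).add ((hasDerivAt_id w).const_mul P)
      exact this.congr_deriv (by simp [hpxc w hw])
    have := const_of_deriv_zero hUconv hF hu₀ hu
    linarith
  -- pa ∘ τ is a quadratic
  refine ⟨pa (τ u₀) + (pv (τ u₀) + P * u₀) * u₀ - P / 2 * u₀ ^ 2,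
    -(pv (τ u₀) + P * u₀), P / 2, fun u hu => ?_⟩
  have hF : ∀ w ∈ U, HasDerivAt
      (fun z => pa (τ z) + (pv (τ u₀) + P * u₀) * z - P / 2 * z ^ 2) 0 w := by
    intro w hw
    have h1 := ((key w hw).1).add ((hasDerivAt_id w).const_mul (pv (τ u₀) + P * u₀))
    have h2 : HasDerivAt (fun z : ℝ => P / 2 * z ^ 2) (P * w) w := by
      have := ((hasDerivAt_pow 2 w)).const_mul (P / 2)
      exact this.congr_deriv (by norm_num; ring)
    have := h1.sub h2
    have heq : -pv (τ w) + (pv (τ u₀) + P * u₀) - P * w = 0 := by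
      rw [hpvc w hw]; ring
    exact this.congr_deriv (by simp only [mul_one]; linarith [heq])
  have := const_of_deriv_zero hUconv hF hu₀ hu
  nlinarith [this]
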